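/- Let A_α, α = 1,…,p, be nonnegative operators on H, τ > 0, σ ≥ 1/2. Define S̃ = (1/p) Σ_α (I + σpτA_α)⁻¹(I − (1−σ)pτA_α). Then ‖S̃‖ ≤ 1. -/

import Mathlib

open RealInnerProductSpace Finset

lemma aux_isUnit {E : Type*} [NormedAddCommGroup E] [InnerProductSpace ℝ E]
    [FiniteDimensional ℝ E] (A : E →L[ℝ] E) (hA : ∀ x : E, 0 ≤ ⟪A x, x⟫)
    (c : ℝ) (hc : 0 ≤ c) : IsUnit (1 + c • A) := by
  rw [ContinuousLinearMap.isUnit_iff_bijective]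
  have hinj : Function.Injective ⇑(1 + c • A : E →L[ℝ] E) := by
    rw [injective_iff_map_eq_zero]
    intro x hx
    have hx' : x + c • A x = 0 := by simpa using hx
    have h1 : ⟪x + c • A x, x⟫ = 0 := by rw [hx']; simp
    have h2 : ⟪x + c • A x, x⟫ = ‖x‖^2 + c * ⟪A x, x⟫ := by
      rw [inner_add_left, real_inner_smul_left, real_inner_self_eq_norm_sq]
    have h3 : 0 ≤ c * ⟪A x, x⟫ := mul_nonneg hc (hA x)
    have h4 : ‖x‖ = 0 := by nlinarith [norm_nonneg x, sq_nonneg ‖x‖]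
    simpa using h4
  exact ⟨hinj, LinearMap.injective_iff_surjective.mp hinj⟩

lemma aux_key {E : Type*} [NormedAddCommGroup E] [InnerProductSpace ℝ E]
    [FiniteDimensional ℝ E] (A : E →L[ℝ] E) (hA : ∀ x : E, 0 ≤ ⟪A x, x⟫)
    (c d : ℝ) (hc : 0 < c) (hd1 : 0 ≤ c - d) (hd2 : 0 ≤ c + d) (x : E) :
    ‖(Ring.inverse (1 + c • A) * (1 - d • A)) x‖ ≤ ‖x‖ := by
  set L : E →L[ℝ] E := 1 + c • A with hLdef
  have hu : IsUnit L := aux_isUnit A hA c hc.le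
  set B := Ring.inverse L with hBdef
  have hBL : B * L = 1 := Ring.inverse_mul_cancel _ hu
  have hLB : L * B = 1 := Ring.mul_inverse_cancel _ hu
  set z := B ((1 - c • A) x) with hzdef
  clear_value B
  clear_value z
  have hLapp : ∀ u : E, L u = u + c • A u := fun u => by simp [hLdef]
  have hLz : L z = x - c • A x := by
    have h := congrArg (fun (T : E →L[ℝ] E) => T ((1 - c • A) x)) hLB
    simpa [hzdef] using h
  have hznorm : ‖z‖ ≤ ‖x‖ := by
    have h1 : z + c • A z = x - c • A x := by rw [← hLapp]; exact hLz
    have hrel : z - x = -(c • A (z + x)) := by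
      rw [map_add, smul_add]
      rw [eq_sub_iff_add_eq] at h1
      calc z - x = z - (z + c • A z + c • A x) := by rw [h1]
        _ = -(c • A z + c • A x) := by abel
    have hineq : ⟪z - x, z + x⟫ ≤ 0 := by
      rw [hrel, inner_neg_left, real_inner_smul_left]
      have := hA (z + x)
      nlinarith
    have hexp : ⟪z - x, z + x⟫ = ‖z‖^2 - ‖x‖^2 := by
      rw [inner_sub_left, inner_add_right, inner_add_right,
        real_inner_self_eq_norm_sq, real_inner_self_eq_norm_sq, real_inner_comm x z]
      ring
    nlinarith [norm_nonneg z, norm_nonneg x]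
  -- convex combination
  set μ := (c - d) / (2 * c) with hμdef
  set ν := (c + d) / (2 * c) with hνdef
  have hμ : 0 ≤ μ := div_nonneg hd1 (by linarith)
  have hν : 0 ≤ ν := div_nonneg hd2 (by linarith)
  have hμν : μ + ν = 1 := by
    rw [hμdef, hνdef, ← add_div, div_eq_one_iff_eq (ne_of_gt (by linarith))]; ring
  have hkey : (B * (1 - d • A)) x = μ • x + ν • z := by
    have h1 : L (μ • x + ν • z) = (1 - d • A) x := by
      rw [map_add, map_smul, map_smul, hLapp x, hLz]
      have hsc : μ * c - ν * c = -d := by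
        rw [hμdef, hνdef]; field_simp; ring
      calc μ • (x + c • A x) + ν • (x - c • A x)
          = (μ + ν) • x + (μ * c - ν * c) • A x := by
            rw [smul_add, smul_sub, smul_smul, smul_smul, add_smul, sub_smul]
            abel
        _ = x + (-d) • A x := by rw [hμν, hsc, one_smul]
        _ = (1 - d • A) x := by simp [sub_smul, neg_smul]; abel
    have h2 : (B * (1 - d • A)) x = B ((1 - d • A) x) := rfl
    rw [h2, ← h1]
    have h3 : B (L (μ • x + ν • z)) = (B * L) (μ • x + ν • z) := rfl
    rw [h3, hBL, ContinuousLinearMap.one_apply]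
  rw [hkey]
  calc ‖μ • x + ν • z‖ ≤ ‖μ • x‖ + ‖ν • z‖ := norm_add_le _ _
    _ = μ * ‖x‖ + ν * ‖z‖ := by
        rw [norm_smul, norm_smul, Real.norm_of_nonneg hμ, Real.norm_of_nonneg hν]
    _ ≤ μ * ‖x‖ + ν * ‖x‖ := by nlinarith
    _ = ‖x‖ := by rw [← add_mul, hμν, one_mul]

theorem stmt12 {E : Type*} [NormedAddCommGroup E] [InnerProductSpace ℝ E]
    [FiniteDimensional ℝ E]
    (p : ℕ) (hp : 1 ≤ p) (A : Fin p → (E →L[ℝ] E))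
    (hA : ∀ α, ∀ x : E, 0 ≤ ⟪A α x, x⟫)
    (τ σ : ℝ) (hτ : 0 < τ) (hσ : 1/2 ≤ σ) :
    ‖(p : ℝ)⁻¹ • ∑ α, Ring.inverse (1 + (σ * p * τ) • A α) *
        (1 - ((1 - σ) * p * τ) • A α)‖ ≤ 1 := by
  have hp' : (0:ℝ) < p := by exact_mod_cast Nat.pos_of_ne_zero (by omega)
  have hpt : (0:ℝ) < p * τ := mul_pos hp' hτ
  have hc : 0 < σ * p * τ := by nlinarith
  have hd1 : 0 ≤ σ * p * τ - (1 - σ) * p * τ := by nlinarith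
  have hd2 : 0 ≤ σ * p * τ + (1 - σ) * p * τ := by nlinarith
  apply ContinuousLinearMap.opNorm_le_bound _ zero_le_one
  intro x
  rw [ContinuousLinearMap.smul_apply, norm_smul, ContinuousLinearMap.sum_apply,
    one_mul]
  have hsum : ‖∑ α, (Ring.inverse (1 + (σ * p * τ) • A α) *
      (1 - ((1 - σ) * p * τ) • A α)) x‖ ≤ (p : ℝ) * ‖x‖ := by
    calc ‖∑ α, (Ring.inverse (1 + (σ * p * τ) • A α) *
        (1 - ((1 - σ) * p * τ) • A α)) x‖
        ≤ ∑ α, ‖(Ring.inverse (1 + (σ * p * τ) • A α) *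
          (1 - ((1 - σ) * p * τ) • A α)) x‖ := norm_sum_le _ _
      _ ≤ ∑ _α : Fin p, ‖x‖ := by
          apply Finset.sum_le_sum
          intro α _
          exact aux_key (A α) (hA α) _ _ hc hd1 hd2 x
      _ = (p : ℝ) * ‖x‖ := by simp [mul_comm]
  rw [Real.norm_of_nonneg (by positivity : (0:ℝ) ≤ (p:ℝ)⁻¹)]
  calc (p:ℝ)⁻¹ * ‖∑ α, (Ring.inverse (1 + (σ * p * τ) • A α) *
      (1 - ((1 - σ) * p * τ) • A α)) x‖ ≤ (p:ℝ)⁻¹ * ((p:ℝ) * ‖x‖) := by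
        apply mul_le_mul_of_nonneg_left hsum (by positivity)
    _ = ‖x‖ := by field_simp
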